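/- Let n ≥ 2, λ₀ > 0 with λ₀ ≠ (n-1)²/(4n²), and λ ≥ λ₀. Define α₊ = (n-1)/2 if λ₀ > (n-1)²/(4n²), and α₊ = ((n-1) - √((n-1)² - 4n²λ₀))/2 if 0 < λ₀ < (n-1)²/(4n²). Define c_E as (n-1)/2 in the first case and 2n²λ₀/(n-1) in the second. If X : ℝ → ℝ is a C² solution of the damped oscillator equation Ẍ + (n-1)Ẋ + n²λX = 0, then the energy E(t) = (1/2)Ẋ(t)² + (n²λ/2)X(t)² + c_E X(t)Ẋ(t) satisfies dE/dt ≤ -2α₊ E(t) for all t. -/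

import Mathlib

/-- the corrected energy of a solution of the damped oscillator
equation `Ẍ + (n-1)Ẋ + n²λX = 0` satisfies `dE/dt ≤ -2α₊E`. -/
theorem damped_oscillator_energy_decay
    (n lam0 lam alphaPlus cE : ℝ) (hn : 2 ≤ n) (hlam0 : 0 < lam0)
    (hne : lam0 ≠ (n - 1) ^ 2 / (4 * n ^ 2)) (hlam : lam0 ≤ lam)
    (halpha : alphaPlus = if (n - 1) ^ 2 / (4 * n ^ 2) < lam0 then (n - 1) / 2
                else ((n - 1) - Real.sqrt ((n - 1) ^ 2 - 4 * n ^ 2 * lam0)) / 2)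
    (hcE : cE = if (n - 1) ^ 2 / (4 * n ^ 2) < lam0 then (n - 1) / 2
                else 2 * n ^ 2 * lam0 / (n - 1))
    (X : ℝ → ℝ) (hX : ContDiff ℝ 2 X)
    (hode : ∀ t, deriv (deriv X) t + (n - 1) * deriv X t + n ^ 2 * lam * X t = 0) :
    ∀ t, deriv (fun s => (1 / 2) * (deriv X s) ^ 2 + (n ^ 2 * lam / 2) * (X s) ^ 2
            + cE * X s * deriv X s) t
      ≤ -2 * alphaPlus * ((1 / 2) * (deriv X t) ^ 2 + (n ^ 2 * lam / 2) * (X t) ^ 2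
            + cE * X t * deriv X t) := by
  intro t
  -- Differentiability facts
  have hX1 : ContDiff ℝ 1 (deriv X) := by
    have hX' : ContDiff ℝ ((1 : ℕ∞) + 1) X := hX.of_le (by norm_num)
    exact (contDiff_succ_iff_deriv.mp hX').2.2
  have hxd : HasDerivAt X (deriv X t) t :=
    ((hX.differentiable (by norm_num)) t).hasDerivAt
  have hvd : HasDerivAt (deriv X) (deriv (deriv X) t) t :=
    ((hX1.differentiable one_ne_zero) t).hasDerivAt
  set x := X t with hx
  set v := deriv X t with hv
  set w := deriv (deriv X) t with hwdef
  have hw : w = -((n - 1) * v) - n ^ 2 * lam * x := by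
    have := hode t
    linarith
  have hE : HasDerivAt (fun s => (1 / 2) * (deriv X s) ^ 2 + (n ^ 2 * lam / 2) * (X s) ^ 2
      + cE * X s * deriv X s)
      ((1 / 2) * (2 * v ^ 1 * w) + (n ^ 2 * lam / 2) * (2 * x ^ 1 * v)
        + ((cE * v) * v + (cE * x) * w)) t := by
    exact (((hvd.pow 2).const_mul (1/2)).add ((hxd.pow 2).const_mul (n ^ 2 * lam / 2))).add
      ((hxd.const_mul cE).mul hvd)
  rw [hE.deriv]
  by_cases h : (n - 1) ^ 2 / (4 * n ^ 2) < lam0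
  · rw [halpha, hcE, if_pos h, if_pos h, hw]
    exact le_of_eq (by ring)
  · rw [halpha, hcE, if_neg h, if_neg h]
    set D := Real.sqrt ((n - 1) ^ 2 - 4 * n ^ 2 * lam0) with hDdef
    have hn2 : (0:ℝ) < 4 * n ^ 2 := by positivity
    have hlt : lam0 < (n - 1) ^ 2 / (4 * n ^ 2) := lt_of_le_of_ne (not_lt.mp h) hne
    have hlt' : 4 * n ^ 2 * lam0 < (n - 1) ^ 2 := by
      rw [lt_div_iff₀ hn2] at hlt; linarith
    have hD2 : D ^ 2 = (n - 1) ^ 2 - 4 * n ^ 2 * lam0 :=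
      Real.sq_sqrt (by linarith)
    have hD0 : 0 ≤ D := Real.sqrt_nonneg _
    have ha : (0:ℝ) < n - 1 := by linarith
    have hane : (n:ℝ) - 1 ≠ 0 := ne_of_gt ha
    have hc : (2 * n ^ 2 * lam0 / (n - 1)) * (n - 1) = 2 * n ^ 2 * lam0 := by
      field_simp
    have hEq : 2 * (n - 1) * ((n - 1) + D) *
        (((1 / 2) * (2 * v ^ 1 * w) + (n ^ 2 * lam / 2) * (2 * x ^ 1 * v)
          + ((2 * n ^ 2 * lam0 / (n - 1) * v) * v + (2 * n ^ 2 * lam0 / (n - 1) * x) * w))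
         - (-2 * (((n - 1) - D) / 2) * ((1 / 2) * v ^ 2 + (n ^ 2 * lam / 2) * x ^ 2
            + 2 * n ^ 2 * lam0 / (n - 1) * x * v)))
        = -(D * ((((n - 1) + D) * v + 2 * n ^ 2 * lam0 * x) ^ 2
            + 4 * n ^ 2 * lam0 * (n ^ 2 * lam - n ^ 2 * lam0) * x ^ 2)) := by
      rw [hw]
      linear_combination (((n - 1) + D) * v ^ 2 - n ^ 2 * lam * (n - 1) * x ^ 2) * hD2
        + (2 * ((n - 1) + D) * v ^ 2 - 2 * D * ((n - 1) + D) * x * v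
            - 2 * n ^ 2 * lam * ((n - 1) + D) * x ^ 2) * hc
    have hQ : 0 ≤ D * ((((n - 1) + D) * v + 2 * n ^ 2 * lam0 * x) ^ 2
        + 4 * n ^ 2 * lam0 * (n ^ 2 * lam - n ^ 2 * lam0) * x ^ 2) := by
      have h1 : 0 ≤ n ^ 2 * lam - n ^ 2 * lam0 := by nlinarith
      positivity
    have hpos : 0 < 2 * (n - 1) * ((n - 1) + D) := by positivity
    set A := (1 / 2) * (2 * v ^ 1 * w) + (n ^ 2 * lam / 2) * (2 * x ^ 1 * v)
      + ((2 * n ^ 2 * lam0 / (n - 1) * v) * v + (2 * n ^ 2 * lam0 / (n - 1) * x) * w) with hA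
    set B := -2 * (((n - 1) - D) / 2) * ((1 / 2) * v ^ 2 + (n ^ 2 * lam / 2) * x ^ 2
      + 2 * n ^ 2 * lam0 / (n - 1) * x * v) with hB
    have h1 : 2 * (n - 1) * ((n - 1) + D) * (A - B) ≤ 2 * (n - 1) * ((n - 1) + D) * 0 := by
      rw [hEq, mul_zero]; linarith
    have h2 := le_of_mul_le_mul_left h1 hpos
    linarith
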